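/- If ≻₁ and ≻₂ are strict partial orders on U with ≻₁ ⊆ ≻₂, then for every finite set r, winnow(≻₂, winnow(≻₁, r)) = winnow(≻₂, r). -/

import Mathlib

def winnow {U : Type*} (p : U → U → Prop) (r : Set U) : Set U :=
  {t ∈ r | ¬ ∃ t' ∈ r, p t' t}

lemma exists_max_aux {U : Type*} (p : U → U → Prop)
    (hirr : ∀ x, ¬ p x x) (htrans : ∀ x y z, p x y → p y z → p x z)
    {s : Set U} (hs : s.Finite) (hne : s.Nonempty) :
    ∃ m ∈ s, ∀ x ∈ s, ¬ p x m := by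
  revert hne
  refine Set.Finite.induction_on _ hs (fun hne => absurd hne (by simp)) ?_
  intro a s ha hsf ih _
  rcases s.eq_empty_or_nonempty with rfl | hsne
  · exact ⟨a, by simp, by simpa using hirr a⟩
  · obtain ⟨m, hm, hmax⟩ := ih hsne
    by_cases hpa : p a m
    · refine ⟨a, Set.mem_insert _ _, ?_⟩
      rintro x (rfl | hx)
      · exact hirr x
      · exact fun hxa => hmax x hx (htrans x a m hxa hpa)
    · refine ⟨m, Set.mem_insert_of_mem _ hm, ?_⟩
      rintro x (rfl | hx)
      · exact hpa
      · exact hmax x hx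

theorem stmt_7 {U : Type*} (p₁ p₂ : U → U → Prop)
    (hirr₁ : ∀ x, ¬ p₁ x x) (htrans₁ : ∀ x y z, p₁ x y → p₁ y z → p₁ x z)
    (hirr₂ : ∀ x, ¬ p₂ x x) (htrans₂ : ∀ x y z, p₂ x y → p₂ y z → p₂ x z)
    (hsub : ∀ t₁ t₂, p₁ t₁ t₂ → p₂ t₁ t₂)
    (r : Set U) (hfin : r.Finite) :
    winnow p₂ (winnow p₁ r) = winnow p₂ r := by
  ext t
  simp only [winnow, Set.mem_setOf_eq]
  constructor
  · rintro ⟨⟨htr, hnd1⟩, hnd2⟩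
    refine ⟨htr, ?_⟩
    rintro ⟨t', ht'r, hpt'⟩
    set s : Set U := {x ∈ r | p₂ x t} with hsdef
    have hsne : s.Nonempty := ⟨t', ht'r, hpt'⟩
    obtain ⟨m, ⟨hmr, hmt⟩, hmax⟩ :=
      exists_max_aux p₂ hirr₂ htrans₂ (hfin.subset (fun x hx => hx.1)) hsne
    have hmw : m ∈ winnow p₁ r := by
      refine ⟨hmr, ?_⟩
      rintro ⟨y, hyr, hpy⟩
      exact hmax y ⟨hyr, htrans₂ y m t (hsub y m hpy) hmt⟩ (hsub y m hpy)
    exact hnd2 ⟨m, hmw, hmt⟩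
  · rintro ⟨htr, hnd⟩
    have htw : ¬ ∃ t' ∈ r, p₁ t' t := fun ⟨t', h1, h2⟩ => hnd ⟨t', h1, hsub _ _ h2⟩
    exact ⟨⟨htr, htw⟩, fun ⟨t', ht', h2⟩ => hnd ⟨t', ht'.1, h2⟩⟩
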